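/- For every natural number n ≥ 1, n ≤ C(h + w, w), where h = ⌊log₂ n⌋ (the largest k with 2^k ≤ n), w = π(n) is the number of primes less than or equal to n, and C denotes the binomial coefficient. -/

import Mathlib

theorem le_choose_log_add_primeCounting (n : ℕ) (hn : 1 ≤ n) :
    n ≤ (Nat.log 2 n + Nat.primeCounting n).choose (Nat.primeCounting n) := by
  classical
  set h := Nat.log 2 n with hh
  set w := Nat.primeCounting n with hw
  have hwcount : w = Nat.count Nat.Prime (n + 1) := rfl
  have hcountlt : ∀ p, p.Prime → p ≤ n → Nat.count Nat.Prime p < w := by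
    intro p hp hpn
    have h1 : Nat.count Nat.Prime (p + 1) = Nat.count Nat.Prime p + 1 := by
      rw [Nat.count_succ]; simp [hp]
    have h2 : Nat.count Nat.Prime (p + 1) ≤ Nat.count Nat.Prime (n + 1) :=
      Nat.count_monotone _ (by omega)
    omega
  -- encoding
  let g : ℕ → Fin (w + 1) := fun p =>
    ⟨min (Nat.count Nat.Prime p) w, Nat.lt_succ_of_le (min_le_right _ _)⟩
  let pad : Fin (w + 1) := ⟨w, Nat.lt_succ_self w⟩
  let enc : ℕ → Multiset (Fin (w + 1)) := fun m =>
    (↑(m.primeFactorsList.map g) : Multiset (Fin (w + 1))) +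
      Multiset.replicate (h - m.primeFactorsList.length) pad
  have hlen : ∀ m ∈ Finset.Icc 1 n, m.primeFactorsList.length ≤ h := by
    intro m hm
    simp only [Finset.mem_Icc] at hm
    have hprod : m.primeFactorsList.prod = m := Nat.prod_primeFactorsList (by omega)
    have hpow : 2 ^ m.primeFactorsList.length ≤ m := by
      calc 2 ^ m.primeFactorsList.length
          = 2 ^ Multiset.card (↑m.primeFactorsList : Multiset ℕ) := by simp
        _ ≤ (↑m.primeFactorsList : Multiset ℕ).prod := by
            apply Multiset.pow_card_le_prod
            intro x hx
            exact (Nat.prime_of_mem_primeFactorsList (by simpa using hx)).two_le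
        _ = m := by simpa using hprod
    rw [hh]
    exact (Nat.le_log_iff_pow_le one_lt_two (by omega)).mpr (le_trans hpow hm.2)
  have hdec : ∀ m ∈ Finset.Icc 1 n,
      (((enc m).filter fun i : Fin (w + 1) => (i : ℕ) < w).map fun i : Fin (w + 1) => Nat.nth Nat.Prime (i : ℕ)).prod
        = m := by
    intro m hm
    simp only [Finset.mem_Icc] at hm
    have hmem : ∀ p ∈ m.primeFactorsList, p.Prime ∧ p ≤ n := fun p hp =>
      ⟨Nat.prime_of_mem_primeFactorsList hp,
        le_trans (Nat.le_of_mem_primeFactorsList hp) hm.2⟩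
    have hfilter1 :
        ((↑(m.primeFactorsList.map g) : Multiset (Fin (w + 1))).filter
          fun i : Fin (w + 1) => (i : ℕ) < w) = (↑(m.primeFactorsList.map g) : Multiset (Fin (w + 1))) := by
      apply Multiset.filter_eq_self.mpr
      intro i hi
      simp only [Multiset.mem_coe, List.mem_map] at hi
      obtain ⟨p, hp, rfl⟩ := hi
      have := hcountlt p (hmem p hp).1 (hmem p hp).2
      simp only [g]
      omega
    have hfilter2 :
        ((Multiset.replicate (h - m.primeFactorsList.length) pad).filter
          fun i : Fin (w + 1) => (i : ℕ) < w) = 0 := by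
      apply Multiset.filter_eq_nil.mpr
      intro i hi
      have := Multiset.eq_of_mem_replicate hi
      subst this
      simp [pad]
    rw [show enc m = _ + _ from rfl, Multiset.filter_add, hfilter1, hfilter2, add_zero]
    have : ((↑(m.primeFactorsList.map g) : Multiset (Fin (w + 1))).map
        fun i : Fin (w + 1) => Nat.nth Nat.Prime (i : ℕ)) = (↑m.primeFactorsList : Multiset ℕ) := by
      rw [Multiset.map_coe, List.map_map]
      congr 1
      conv_rhs => rw [← List.map_id m.primeFactorsList]
      apply List.map_congr_left
      intro p hp
      have hpw := hcountlt p (hmem p hp).1 (hmem p hp).2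
      simp only [Function.comp_apply, g]
      rw [min_eq_left (le_of_lt hpw)]
      exact Nat.nth_count (hmem p hp).1
    rw [this]
    simpa using Nat.prod_primeFactorsList (show m ≠ 0 by omega)
  -- target finset
  let T : Finset (Multiset (Fin (w + 1))) :=
    (Finset.univ : Finset (Sym (Fin (w + 1)) h)).image Sym.toMultiset
  have hmaps : ∀ m ∈ Finset.Icc 1 n, enc m ∈ T := by
    intro m hm
    have hcard : Multiset.card (enc m) = h := by
      have := hlen m hm
      simp only [enc, Multiset.card_add, Multiset.coe_card, List.length_map,
        Multiset.card_replicate]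
      omega
    exact Finset.mem_image.mpr ⟨⟨enc m, hcard⟩, Finset.mem_univ _, rfl⟩
  have hinj : Set.InjOn enc (Finset.Icc 1 n) := by
    intro a ha b hb hab
    rw [← hdec a ha, ← hdec b hb, hab]
  have hcardle : (Finset.Icc 1 n).card ≤ T.card :=
    Finset.card_le_card_of_injOn enc hmaps hinj
  have hTcard : T.card = (w + h).choose h := by
    have : T.card = Fintype.card (Sym (Fin (w + 1)) h) := by
      rw [Fintype.card, Finset.card_image_of_injective _ Sym.coe_injective]
    rw [this, Sym.card_sym_eq_multichoose, Nat.multichoose_eq, Fintype.card_fin]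
    congr 1
    omega
  have : n ≤ (w + h).choose h := by
    have := Nat.card_Icc 1 n
    omega
  calc n ≤ (w + h).choose h := this
    _ = (w + h).choose w := Nat.choose_symm_add.symm
    _ = (h + w).choose w := by rw [add_comm]
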